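/- Reduction via the exponential ansatz: let d1, d2, d3 be positive real constants with d1 < d3, set κ = 1/√(d3 − d1), and let α0, α1, α2 be real constants. Suppose φ1, φ2, φ3 : ℝ → ℝ are differentiable and solve the ODE system φ1' + φ1(φ2 − 1) = 0, φ2' − φ2φ3 + ((d2 − d3)/(d1 − d3))·φ2(φ2 − 1) − (α0(d1 − d2)/(d1 − d3))·φ1 = 0, φ3' + φ2φ3 + (α0(d1 − d2)/(d1 − d3))·φ1 = 0. Then the functions u(t,x) = φ1(t)·(α0 + α1·exp(κx + d1κ²t) + α2·exp(−κx + d1κ²t)), v(t,x) = φ2(t) − u(t,x), w(t,x) = φ3(t) + ((d1 − d2)/(d1 − d3))·u(t,x) satisfy the HGF system (2-3*) at every point (t,x) ∈ ℝ × ℝ. -/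

import Mathlib

private lemma HasDerivAt.congr_d {f : ℝ → ℝ} {f' g' x : ℝ} (h : HasDerivAt f f' x)
    (e : f' = g') : HasDerivAt f g' x := e ▸ h

private lemma exp_affine (a b : ℝ) (x : ℝ) :
    HasDerivAt (fun s : ℝ => Real.exp (b + a * s)) (a * Real.exp (b + a * x)) x := by
  have h : HasDerivAt (fun s : ℝ => b + a * s) a x := by
    simpa using ((hasDerivAt_id x).const_mul a).const_add b
  simpa [mul_comm] using h.exp

private lemma exp_affine' (a b : ℝ) (x : ℝ) :
    HasDerivAt (fun y : ℝ => Real.exp (a * y + b)) (a * Real.exp (a * x + b)) x := by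
  have h : HasDerivAt (fun y : ℝ => a * y + b) a x := by
    simpa using ((hasDerivAt_id x).const_mul a).add_const b
  simpa [mul_comm] using h.exp

private lemma exp_affine_neg (a b : ℝ) (x : ℝ) :
    HasDerivAt (fun y : ℝ => Real.exp (-(a * y) + b)) (-(a * Real.exp (-(a * x) + b))) x := by
  simpa [neg_mul] using exp_affine' (-a) b x

/-- Reduction via the exponential ansatz (d1 < d3) to the HGF system (2-3*). -/
theorem hgf_reduction_exp_ansatz
    (d1 d2 d3 : ℝ) (hd1 : 0 < d1) (hd2 : 0 < d2) (hd3 : 0 < d3) (hd13 : d1 < d3)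
    (κ : ℝ) (hκ : κ = 1 / Real.sqrt (d3 - d1))
    (α0 α1 α2 : ℝ)
    (φ1 φ2 φ3 : ℝ → ℝ)
    (hφ1 : Differentiable ℝ φ1) (hφ2 : Differentiable ℝ φ2) (hφ3 : Differentiable ℝ φ3)
    (hode1 : ∀ t : ℝ, deriv φ1 t + φ1 t * (φ2 t - 1) = 0)
    (hode2 : ∀ t : ℝ, deriv φ2 t - φ2 t * φ3 t
        + ((d2 - d3) / (d1 - d3)) * (φ2 t * (φ2 t - 1))
        - (α0 * (d1 - d2) / (d1 - d3)) * φ1 t = 0)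
    (hode3 : ∀ t : ℝ, deriv φ3 t + φ2 t * φ3 t
        + (α0 * (d1 - d2) / (d1 - d3)) * φ1 t = 0)
    (u v w : ℝ → ℝ → ℝ)
    (hu : ∀ t x : ℝ, u t x = φ1 t * (α0 + α1 * Real.exp (κ * x + d1 * κ ^ 2 * t)
        + α2 * Real.exp (-(κ * x) + d1 * κ ^ 2 * t)))
    (hv : ∀ t x : ℝ, v t x = φ2 t - u t x)
    (hw : ∀ t x : ℝ, w t x = φ3 t + ((d1 - d2) / (d1 - d3)) * u t x) :
    ∀ t x : ℝ,
      deriv (fun s => u s x) t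
        = d1 * deriv (fun y => deriv (fun z => u t z) y) x
          + u t x * (1 - u t x - v t x) ∧
      deriv (fun s => v s x) t
        = d2 * deriv (fun y => deriv (fun z => v t z) y) x
          + ((d2 - d3) / (d1 - d3)) * (v t x * (1 - u t x - v t x))
          + u t x * w t x + v t x * w t x ∧
      deriv (fun s => w s x) t
        = d3 * deriv (fun y => deriv (fun z => w t z) y) x
          - u t x * w t x - v t x * w t x := by
  intro t x
  have hpos : (0:ℝ) < d3 - d1 := by linarith
  have hκ2 : κ ^ 2 = 1 / (d3 - d1) := by
    rw [hκ, div_pow, one_pow, Real.sq_sqrt hpos.le]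
  have hne : d1 - d3 ≠ 0 := sub_ne_zero.mpr (ne_of_lt hd13)
  have hne' : d3 - d1 ≠ 0 := sub_ne_zero.mpr (ne_of_gt hd13)
  -- time derivative of u
  have hut : HasDerivAt (fun s => u s x)
      (deriv φ1 t * (α0 + α1 * Real.exp (κ * x + d1 * κ ^ 2 * t)
          + α2 * Real.exp (-(κ * x) + d1 * κ ^ 2 * t))
        + φ1 t * (d1 * κ ^ 2 * (α1 * Real.exp (κ * x + d1 * κ ^ 2 * t)
          + α2 * Real.exp (-(κ * x) + d1 * κ ^ 2 * t)))) t := by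
    have hfun : (fun s : ℝ => u s x)
        = (fun s => φ1 s * (α0 + (α1 * Real.exp (κ * x + d1 * κ ^ 2 * s)
            + α2 * Real.exp (-(κ * x) + d1 * κ ^ 2 * s)))) :=
      funext fun s => by rw [hu s x]; ring
    rw [hfun]
    exact ((hφ1 t).hasDerivAt.mul
      ((((exp_affine (d1 * κ ^ 2) (κ * x) t).const_mul α1).add
        ((exp_affine (d1 * κ ^ 2) (-(κ * x)) t).const_mul α2)).const_add α0)).congr_d
      (by simp only [Pi.add_apply]; ring)
  -- first space derivative of u
  have hux : ∀ y : ℝ, HasDerivAt (fun z => u t z)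
      (φ1 t * (α1 * (κ * Real.exp (κ * y + d1 * κ ^ 2 * t))
        - α2 * (κ * Real.exp (-(κ * y) + d1 * κ ^ 2 * t)))) y := by
    intro y
    have hfun : (fun z : ℝ => u t z)
        = (fun z => φ1 t * (α0 + (α1 * Real.exp (κ * z + d1 * κ ^ 2 * t)
            + α2 * Real.exp (-(κ * z) + d1 * κ ^ 2 * t)))) :=
      funext fun z => by rw [hu t z]; ring
    rw [hfun]
    exact (((((exp_affine' κ (d1 * κ ^ 2 * t) y).const_mul α1).add
      ((exp_affine_neg κ (d1 * κ ^ 2 * t) y).const_mul α2)).const_add α0).const_mul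
      (φ1 t)).congr_d (by ring)
  -- second space derivative of u
  have hgx : HasDerivAt (fun y => φ1 t * (α1 * (κ * Real.exp (κ * y + d1 * κ ^ 2 * t))
        - α2 * (κ * Real.exp (-(κ * y) + d1 * κ ^ 2 * t))))
      (φ1 t * (κ ^ 2 * (α1 * Real.exp (κ * x + d1 * κ ^ 2 * t)
        + α2 * Real.exp (-(κ * x) + d1 * κ ^ 2 * t)))) x := by
    exact (((((exp_affine' κ (d1 * κ ^ 2 * t) x).const_mul κ).const_mul α1).sub
      (((exp_affine_neg κ (d1 * κ ^ 2 * t) x).const_mul κ).const_mul α2)).const_mul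
      (φ1 t)).congr_d (by ring)
  have hDu : (fun y : ℝ => deriv (fun z => u t z) y)
      = (fun y => φ1 t * (α1 * (κ * Real.exp (κ * y + d1 * κ ^ 2 * t))
        - α2 * (κ * Real.exp (-(κ * y) + d1 * κ ^ 2 * t)))) :=
    funext fun y => (hux y).deriv
  have hu_xx : deriv (fun y => deriv (fun z => u t z) y) x
      = φ1 t * (κ ^ 2 * (α1 * Real.exp (κ * x + d1 * κ ^ 2 * t)
        + α2 * Real.exp (-(κ * x) + d1 * κ ^ 2 * t))) := by
    rw [hDu]; exact hgx.deriv
  -- v derivatives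
  have hvt : HasDerivAt (fun s => v s x)
      (deriv φ2 t - (deriv φ1 t * (α0 + α1 * Real.exp (κ * x + d1 * κ ^ 2 * t)
          + α2 * Real.exp (-(κ * x) + d1 * κ ^ 2 * t))
        + φ1 t * (d1 * κ ^ 2 * (α1 * Real.exp (κ * x + d1 * κ ^ 2 * t)
          + α2 * Real.exp (-(κ * x) + d1 * κ ^ 2 * t))))) t := by
    have hfun : (fun s : ℝ => v s x) = (fun s => φ2 s - u s x) :=
      funext fun s => hv s x
    rw [hfun]
    exact (hφ2 t).hasDerivAt.sub hut
  have hvx : ∀ y : ℝ, HasDerivAt (fun z => v t z)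
      (-(φ1 t * (α1 * (κ * Real.exp (κ * y + d1 * κ ^ 2 * t))
        - α2 * (κ * Real.exp (-(κ * y) + d1 * κ ^ 2 * t))))) y := by
    intro y
    have hfun : (fun z : ℝ => v t z) = (fun z => φ2 t - u t z) :=
      funext fun z => hv t z
    rw [hfun]
    exact (hux y).const_sub (φ2 t)
  have hDv : (fun y : ℝ => deriv (fun z => v t z) y)
      = (fun y => -(φ1 t * (α1 * (κ * Real.exp (κ * y + d1 * κ ^ 2 * t))
        - α2 * (κ * Real.exp (-(κ * y) + d1 * κ ^ 2 * t))))) :=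
    funext fun y => (hvx y).deriv
  have hv_xx : deriv (fun y => deriv (fun z => v t z) y) x
      = -(φ1 t * (κ ^ 2 * (α1 * Real.exp (κ * x + d1 * κ ^ 2 * t)
        + α2 * Real.exp (-(κ * x) + d1 * κ ^ 2 * t)))) := by
    rw [hDv]; exact hgx.neg.deriv
  -- w derivatives
  have hwt : HasDerivAt (fun s => w s x)
      (deriv φ3 t + (d1 - d2) / (d1 - d3) * (deriv φ1 t * (α0 + α1 * Real.exp (κ * x + d1 * κ ^ 2 * t)
          + α2 * Real.exp (-(κ * x) + d1 * κ ^ 2 * t))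
        + φ1 t * (d1 * κ ^ 2 * (α1 * Real.exp (κ * x + d1 * κ ^ 2 * t)
          + α2 * Real.exp (-(κ * x) + d1 * κ ^ 2 * t))))) t := by
    have hfun : (fun s : ℝ => w s x) = (fun s => φ3 s + (d1 - d2) / (d1 - d3) * u s x) :=
      funext fun s => hw s x
    rw [hfun]
    exact (hφ3 t).hasDerivAt.add (hut.const_mul ((d1 - d2) / (d1 - d3)))
  have hwx : ∀ y : ℝ, HasDerivAt (fun z => w t z)
      ((d1 - d2) / (d1 - d3) * (φ1 t * (α1 * (κ * Real.exp (κ * y + d1 * κ ^ 2 * t))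
        - α2 * (κ * Real.exp (-(κ * y) + d1 * κ ^ 2 * t))))) y := by
    intro y
    have hfun : (fun z : ℝ => w t z) = (fun z => φ3 t + (d1 - d2) / (d1 - d3) * u t z) :=
      funext fun z => hw t z
    rw [hfun]
    exact ((hux y).const_mul ((d1 - d2) / (d1 - d3))).const_add (φ3 t)
  have hDw : (fun y : ℝ => deriv (fun z => w t z) y)
      = (fun y => (d1 - d2) / (d1 - d3) * (φ1 t * (α1 * (κ * Real.exp (κ * y + d1 * κ ^ 2 * t))
        - α2 * (κ * Real.exp (-(κ * y) + d1 * κ ^ 2 * t))))) :=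
    funext fun y => (hwx y).deriv
  have hw_xx : deriv (fun y => deriv (fun z => w t z) y) x
      = (d1 - d2) / (d1 - d3) * (φ1 t * (κ ^ 2 * (α1 * Real.exp (κ * x + d1 * κ ^ 2 * t)
        + α2 * Real.exp (-(κ * x) + d1 * κ ^ 2 * t)))) := by
    rw [hDw]; exact (hgx.const_mul ((d1 - d2) / (d1 - d3))).deriv
  -- ODE relations
  have hdφ1 : deriv φ1 t = -(φ1 t * (φ2 t - 1)) := by linarith [hode1 t]
  have hdφ2 : deriv φ2 t = φ2 t * φ3 t - ((d2 - d3) / (d1 - d3)) * (φ2 t * (φ2 t - 1))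
      + (α0 * (d1 - d2) / (d1 - d3)) * φ1 t := by linarith [hode2 t]
  have hdφ3 : deriv φ3 t = -(φ2 t * φ3 t) - (α0 * (d1 - d2) / (d1 - d3)) * φ1 t := by
    linarith [hode3 t]
  refine ⟨?_, ?_, ?_⟩
  · rw [hut.deriv, hu_xx, hv t x, hu t x, hdφ1]
    ring
  · rw [hvt.deriv, hv_xx, hv t x, hw t x, hu t x, hdφ1, hdφ2]
    set A := Real.exp (κ * x + d1 * κ ^ 2 * t)
    set B := Real.exp (-(κ * x) + d1 * κ ^ 2 * t)
    rw [hκ2]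
    field_simp
    ring
  · rw [hwt.deriv, hw_xx, hv t x, hw t x, hu t x, hdφ1, hdφ3]
    set A := Real.exp (κ * x + d1 * κ ^ 2 * t)
    set B := Real.exp (-(κ * x) + d1 * κ ^ 2 * t)
    rw [hκ2]
    field_simp
    ring
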